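/- Let d ≥ 3, λ ≥ 0, χ > 0, q ∈ (d, 2d), and let c_0 be such that ∇c_0 ∈ L^d(ℝ^d). Let (p_s)_{s>0} be a family of probability densities on ℝ^d satisfying sup_{s>0} s^{1-d/(2q)} ‖p_s‖_{L^q(ℝ^d)} ≤ C_q for some constant C_q > 0. Then there is a constant C > 0, depending only on d, q, χ, ‖∇c_0‖_{L^d} and C_q, such that for every u > 0 the drift b(u,x) := χ e^{-λu}(g_u * ∇c_0)(x) + χ ∫_0^u (K_{u-s} * p_s)(x) ds satisfies ‖b(u,·)‖_{L^∞(ℝ^d)} ≤ C u^{-1/2}. -/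

import Mathlib

open MeasureTheory ENNReal Set

noncomputable section

abbrev Euc (d : ℕ) := EuclideanSpace ℝ (Fin d)

/-- Gaussian heat kernel `g_t(x) = (2πt)^{-d/2} exp(-|x|²/(2t))` on ℝ^d. -/
def gauss (d : ℕ) (t : ℝ) (x : Euc d) : ℝ :=
  (2 * Real.pi * t) ^ (-(d : ℝ) / 2) * Real.exp (-‖x‖ ^ 2 / (2 * t))

/-- Vector interaction kernel `K_t(x) = e^{-λt} ∇g_t(x) = -(e^{-λt} g_t(x)/t) x`. -/
def Kvec (d : ℕ) (lam t : ℝ) (x : Euc d) : Euc d :=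
  (-(Real.exp (-lam * t) * gauss d t x / t)) • x

/-- The drift `b(u,x) = χ e^{-λu}(g_u * ∇c_0)(x) + χ ∫_0^u (K_{u-s} * p_s)(x) ds`. -/
def drift (d : ℕ) (lam χ : ℝ) (Dc0 : Euc d → Euc d) (p : ℝ → Euc d → ℝ)
    (u : ℝ) (x : Euc d) : Euc d :=
  (χ * Real.exp (-lam * u)) • (∫ y, gauss d u (x - y) • Dc0 y) +
    χ • ∫ s in Set.Ioo (0:ℝ) u, ∫ y, p s y • Kvec d lam (u - s) (x - y)

namespace DriftAux

open Real

variable {d : ℕ}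

lemma integrable_gaussExp {c : ℝ} (hc : 0 < c) :
    Integrable (fun z : Euc d => rexp (-c * ‖z‖ ^ 2)) := by
  have h := (GaussianFourier.integrable_cexp_neg_mul_sq_norm_add (V := Euc d)
      (b := (c : ℂ)) (by simpa using hc) 0 0).norm
  have heq : (fun v : Euc d => ‖Complex.exp (-(c:ℂ) * (‖v‖:ℂ)^2 + 0 * ((inner ℝ (0:Euc d) v : ℝ):ℂ))‖)
      = fun z : Euc d => rexp (-c * ‖z‖ ^ 2) := by
    funext v
    rw [Complex.norm_exp]
    have : (-(c:ℂ) * (‖v‖:ℂ)^2 + 0 * ((inner ℝ (0:Euc d) v : ℝ):ℂ)) = ((-c * ‖v‖^2 : ℝ) : ℂ) := by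
      push_cast; ring
    rw [this, Complex.ofReal_re]
  rwa [heq] at h

lemma integral_gaussExp {c : ℝ} (hc : 0 < c) :
    ∫ z : Euc d, rexp (-c * ‖z‖ ^ 2) = (π / c) ^ ((d : ℝ) / 2) := by
  rw [GaussianFourier.integral_rexp_neg_mul_sq_norm hc]
  norm_num [finrank_euclideanSpace_fin]

lemma integrable_gaussExp' {c : ℝ} (hc : 0 < c) (x : Euc d) :
    Integrable (fun z : Euc d => rexp (-c * ‖x - z‖ ^ 2)) :=
  (integrable_comp_sub_left (fun z : Euc d => rexp (-c * ‖z‖ ^ 2)) x).mpr (integrable_gaussExp hc)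

lemma integral_gaussExp' {c : ℝ} (hc : 0 < c) (x : Euc d) :
    ∫ z : Euc d, rexp (-c * ‖x - z‖ ^ 2) = (π / c) ^ ((d : ℝ) / 2) := by
  rw [integral_sub_left_eq_self (fun z : Euc d => rexp (-c * ‖z‖ ^ 2)) volume x,
    integral_gaussExp hc]

lemma rpow_gaussExp {c r : ℝ} (z : ℝ) : rexp (-c * z) ^ r = rexp (-(c * r) * z) := by
  rw [← Real.exp_mul]; ring_nf

lemma integral_rpow_gaussExp' {c r : ℝ} (hc : 0 < c) (hr : 0 < r) (x : Euc d) :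
    ∫ z : Euc d, rexp (-c * ‖x - z‖ ^ 2) ^ r = (π / (c * r)) ^ ((d : ℝ) / 2) := by
  simp_rw [rpow_gaussExp]
  exact integral_gaussExp' (by positivity) x

lemma memLp_gaussExp' {c r : ℝ} (hc : 0 < c) (hr : 0 < r) (x : Euc d) :
    MemLp (fun z : Euc d => rexp (-c * ‖x - z‖ ^ 2)) (ENNReal.ofReal r) volume := by
  have hm : AEStronglyMeasurable (fun z : Euc d => rexp (-c * ‖x - z‖ ^ 2)) volume :=
    (Continuous.aestronglyMeasurable (by fun_prop))
  have h1 : ENNReal.ofReal r ≠ 0 := by simp [hr, ENNReal.ofReal_eq_zero, not_le]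
  have h2 : ENNReal.ofReal r ≠ ⊤ := ofReal_ne_top
  refine (memLp_norm_rpow_iff (p := ENNReal.ofReal r) hm h1 h2).mp ?_
  rw [ENNReal.div_self h1 h2, ENNReal.toReal_ofReal hr.le, memLp_one_iff_integrable]
  have heq : (fun z : Euc d => ‖rexp (-c * ‖x - z‖ ^ 2)‖ ^ r)
      = fun z : Euc d => rexp (-(c * r) * ‖x - z‖ ^ 2) := by
    funext z
    rw [Real.norm_of_nonneg (Real.exp_pos _).le, rpow_gaussExp]
  rw [heq]
  exact integrable_gaussExp' (by positivity) x

lemma gauss_eq (t : ℝ) (x : Euc d) :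
    gauss d t x = (2 * π * t) ^ (-(d : ℝ) / 2) * rexp (-(1 / (2 * t)) * ‖x‖ ^ 2) := by
  rw [gauss, show -‖x‖ ^ 2 / (2 * t) = -(1 / (2 * t)) * ‖x‖ ^ 2 by ring]

lemma gauss_pos {t : ℝ} (ht : 0 < t) (x : Euc d) : 0 < gauss d t x := by
  rw [gauss]
  have : (0:ℝ) < 2 * π * t := by positivity
  positivity

lemma continuous_Kvec (d : ℕ) (lam t : ℝ) : Continuous (Kvec d lam t) := by
  unfold Kvec gauss
  fun_prop

lemma Kvec_norm_le {lam t : ℝ} (hlam : 0 ≤ lam) (ht : 0 < t) (z : Euc d) :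
    ‖Kvec d lam t z‖ ≤
      (2 * π * t) ^ (-(d : ℝ) / 2) * t ^ (-(1:ℝ) / 2) * rexp (-(1 / (4 * t)) * ‖z‖ ^ 2) := by
  have hv : (0:ℝ) < t ^ ((1:ℝ) / 2) := Real.rpow_pos_of_pos ht _
  have hvv : t ^ ((1:ℝ) / 2) * t ^ ((1:ℝ) / 2) = t := by
    rw [← Real.rpow_add ht]; norm_num
  set v := t ^ ((1:ℝ) / 2) with hvdef
  have hz : ‖z‖ * rexp (-(1 / (4 * t)) * ‖z‖ ^ 2) ≤ v := by
    have h2 : (1 / (4 * t)) * ‖z‖ ^ 2 + 1 ≤ rexp ((1 / (4 * t)) * ‖z‖ ^ 2) :=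
      Real.add_one_le_exp _
    have hw : 4 * t * ((1 / (4 * t)) * ‖z‖ ^ 2) = ‖z‖ ^ 2 := by field_simp
    have h1 : ‖z‖ ≤ v * rexp ((1 / (4 * t)) * ‖z‖ ^ 2) := by
      nlinarith [sq_nonneg (2 * v - ‖z‖), mul_le_mul_of_nonneg_left h2 hv.le, hvv, hv,
        Real.exp_pos ((1 / (4 * t)) * ‖z‖ ^ 2)]
    calc ‖z‖ * rexp (-(1 / (4 * t)) * ‖z‖ ^ 2)
        ≤ (v * rexp ((1 / (4 * t)) * ‖z‖ ^ 2)) * rexp (-(1 / (4 * t)) * ‖z‖ ^ 2) :=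
          mul_le_mul_of_nonneg_right h1 (Real.exp_nonneg _)
      _ = v := by rw [mul_assoc, ← Real.exp_add]; norm_num
  have hg : 0 < gauss d t z := gauss_pos ht z
  have hnorm : ‖Kvec d lam t z‖ = rexp (-lam * t) * gauss d t z / t * ‖z‖ := by
    rw [Kvec, norm_smul, Real.norm_eq_abs, abs_neg,
      abs_of_nonneg (div_nonneg (mul_nonneg (Real.exp_nonneg _) hg.le) ht.le)]
  set C := (2 * π * t) ^ (-(d : ℝ) / 2) with hCdef
  have hC : 0 < C := Real.rpow_pos_of_pos (by positivity) _
  set e4 := rexp (-(1 / (4 * t)) * ‖z‖ ^ 2) with he4def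
  have he4 : 0 < e4 := Real.exp_pos _
  have hhalf : (1:ℝ) / (2 * t) = 1 / (4 * t) + 1 / (4 * t) := by
    field_simp
    ring
  have hsplit : gauss d t z = C * (e4 * e4) := by
    rw [gauss_eq t z, show -(1 / (2 * t)) * ‖z‖ ^ 2
        = -(1 / (4 * t)) * ‖z‖ ^ 2 + -(1 / (4 * t)) * ‖z‖ ^ 2 by rw [hhalf]; ring,
      Real.exp_add, he4def]
  have hvt : v / t = t ^ (-(1:ℝ) / 2) := by
    rw [hvdef, show (-(1:ℝ) / 2) = (1:ℝ) / 2 - 1 by norm_num, Real.rpow_sub ht, Real.rpow_one]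
  calc ‖Kvec d lam t z‖ = rexp (-lam * t) * gauss d t z / t * ‖z‖ := hnorm
    _ ≤ gauss d t z / t * ‖z‖ := by
        refine mul_le_mul_of_nonneg_right ?_ (norm_nonneg z)
        refine (div_le_div_iff_of_pos_right ht).mpr ?_
        exact mul_le_of_le_one_left hg.le (Real.exp_le_one_iff.mpr (by nlinarith))
    _ = (C / t * e4) * (‖z‖ * e4) := by rw [hsplit]; ring
    _ ≤ (C / t * e4) * v := by
        refine mul_le_mul_of_nonneg_left ?_ (by positivity)
        simpa [mul_comm] using hz
    _ = C * t ^ (-(1:ℝ) / 2) * e4 := by rw [← hvt]; ring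

end DriftAux

set_option maxHeartbeats 4000000 in
open Real DriftAux in
/-- Let `d ≥ 3`, `λ ≥ 0`, `χ > 0`, `q ∈ (d,2d)`, `∇c_0 ∈ L^d(ℝ^d)`, and let `(p_s)_{s>0}` be
probability densities with `s^{1-d/(2q)} ‖p_s‖_{L^q} ≤ C_q`. Then there is `C > 0` such that
for all `u > 0`, `‖b(u,·)‖_{L^∞} ≤ C u^{-1/2}`. -/
theorem drift_sup_norm_estimate (d : ℕ) (hd : 3 ≤ d) (lam χ : ℝ) (hlam : 0 ≤ lam) (hχ : 0 < χ)
    (q : ℝ) (hq1 : (d : ℝ) < q) (hq2 : q < 2 * d)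
    (Dc0 : Euc d → Euc d) (hDc0 : MemLp Dc0 (ENNReal.ofReal d) volume)
    (p : ℝ → Euc d → ℝ)
    (hprob : ∀ s : ℝ, 0 < s →
      (∀ x, 0 ≤ p s x) ∧ Integrable (p s) volume ∧ (∫ x, p s x) = 1)
    (Cq : ℝ) (hCq : 0 < Cq)
    (hbound : ∀ s : ℝ, 0 < s →
      eLpNorm (p s) (ENNReal.ofReal q) volume
        ≤ ENNReal.ofReal (Cq / s ^ (1 - (d : ℝ) / (2 * q)))) :
    ∃ C : ℝ, 0 < C ∧ ∀ u : ℝ, 0 < u →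
      eLpNorm (drift d lam χ Dc0 p u) ⊤ volume
        ≤ ENNReal.ofReal (C * u ^ (-(1 / 2 : ℝ))) := by
  have hd3 : (3:ℝ) ≤ (d:ℝ) := by exact_mod_cast hd
  have hd0 : (0:ℝ) < (d:ℝ) := by linarith
  have hd1 : (1:ℝ) < (d:ℝ) := by linarith
  have hq0 : 0 < q := lt_trans hd0 hq1
  have hq1' : 1 < q := by linarith
  set pd := (d:ℝ) / ((d:ℝ) - 1) with hpd_def
  set q' := q / (q - 1) with hq'_def
  have hpd_pos : 0 < pd := div_pos hd0 (by linarith)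
  have hq'_pos : 0 < q' := div_pos hq0 (by linarith)
  have hpd_conj : pd.HolderConjugate (d:ℝ) := by
    rw [Real.holderConjugate_iff]; constructor
    · rw [hpd_def, lt_div_iff₀ (by linarith)]; linarith
    · rw [hpd_def, inv_div]
      field_simp; ring
  have hq_conj : q.HolderConjugate q' := by
    rw [Real.holderConjugate_iff]; constructor
    · exact hq1'
    · rw [hq'_def, inv_div]
      field_simp; ring
  set a' := 1 - (d:ℝ) / (2 * q) with ha'_def
  set b' := 1 / 2 + (d:ℝ) / (2 * q) with hb'_def
  have hdq2 : (d:ℝ) / (2 * q) < 1 / 2 := by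
    rw [div_lt_iff₀ (by positivity)]; linarith
  have hdq2' : 0 < (d:ℝ) / (2 * q) := by positivity
  have ha'0 : 0 < a' := by rw [ha'_def]; linarith
  have ha'1 : a' < 1 := by rw [ha'_def]; linarith
  have hb'0 : 0 < b' := by rw [hb'_def]; linarith
  have hb'1 : b' < 1 := by rw [hb'_def]; linarith
  set N0 := (∫ y : Euc d, ‖Dc0 y‖ ^ (d:ℝ)) ^ (1 / (d:ℝ)) with hN0_def
  have hN0 : 0 ≤ N0 :=
    Real.rpow_nonneg (integral_nonneg fun y => Real.rpow_nonneg (norm_nonneg _) _) _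
  set CA := (2 * π) ^ (-(d:ℝ) / 2) * (2 * π / pd) ^ (((d:ℝ) - 1) / 2) with hCA_def
  have hCA0 : 0 ≤ CA := by
    have h2π : (0:ℝ) < 2 * π := by positivity
    positivity
  set CB := (2 * π) ^ (-(d:ℝ) / 2) * (4 * π / q') ^ ((d:ℝ) / 2 * (1 / q')) with hCB_def
  have hCB0 : 0 ≤ CB := by
    have h2π : (0:ℝ) < 2 * π := by positivity
    positivity
  set M := Cq * CB * ((2:ℝ) ^ b' / (1 - a') + (2:ℝ) ^ a' / (1 - b')) with hM_def
  have hM0 : 0 ≤ M := by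
    refine mul_nonneg (mul_nonneg hCq.le hCB0) (add_nonneg ?_ ?_)
    · exact div_nonneg (Real.rpow_nonneg (by norm_num) _) (by linarith)
    · exact div_nonneg (Real.rpow_nonneg (by norm_num) _) (by linarith)
  refine ⟨χ * (CA * N0 + M) + 1, by positivity, ?_⟩
  intro u hu
  -- pointwise bound
  have hptw : ∀ x : Euc d,
      ‖drift d lam χ Dc0 p u x‖ ≤ (χ * (CA * N0 + M) + 1) * u ^ (-(1 / 2 : ℝ)) := by
    intro x
    have hu2π : (0:ℝ) < 2 * π * u := by positivity
    have hc₁ : (0:ℝ) < 1 / (2 * u) := by positivity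
    set K₀ := (2 * π * u) ^ (-(d:ℝ) / 2) with hK₀_def
    have hK₀ : 0 < K₀ := Real.rpow_pos_of_pos hu2π _
    have hge : ∀ z : Euc d, gauss d u z = K₀ * rexp (-(1 / (2 * u)) * ‖z‖ ^ 2) :=
      fun z => gauss_eq u z
    -- Term 1
    have hmemG : MemLp (fun y : Euc d => gauss d u (x - y)) (ENNReal.ofReal pd) volume := by
      have h := (memLp_gaussExp' hc₁ hpd_pos x).const_mul K₀
      have heq : (fun y : Euc d => K₀ * rexp (-(1 / (2 * u)) * ‖x - y‖ ^ 2))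
          = fun y : Euc d => gauss d u (x - y) := funext fun y => (hge (x - y)).symm
      rwa [heq] at h
    have hHolder1 := integral_mul_le_Lp_mul_Lq_of_nonneg (μ := volume) hpd_conj
      (Filter.Eventually.of_forall fun y => (gauss_pos hu (x - y)).le)
      (Filter.Eventually.of_forall fun y => norm_nonneg (Dc0 y))
      hmemG hDc0.norm
    have hval : (∫ y : Euc d, gauss d u (x - y) ^ pd)
        = K₀ ^ pd * (π / ((1 / (2 * u)) * pd)) ^ ((d:ℝ) / 2) := by
      have heq : (fun y : Euc d => gauss d u (x - y) ^ pd)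
          = fun y : Euc d => K₀ ^ pd * rexp (-(1 / (2 * u)) * ‖x - y‖ ^ 2) ^ pd :=
        funext fun y => by rw [hge (x - y), Real.mul_rpow hK₀.le (Real.exp_nonneg _)]
      rw [heq, integral_const_mul _ _, integral_rpow_gaussExp' hc₁ hpd_pos x]
    have hfac : (∫ y : Euc d, gauss d u (x - y) ^ pd) ^ (1 / pd)
        = K₀ * (2 * π * u / pd) ^ (((d:ℝ) - 1) / 2) := by
      rw [hval, Real.mul_rpow (Real.rpow_nonneg hK₀.le _) (Real.rpow_nonneg (by positivity) _),
        ← Real.rpow_mul hK₀.le, mul_one_div_cancel hpd_pos.ne', Real.rpow_one,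
        show π / ((1 / (2 * u)) * pd) = 2 * π * u / pd by
          field_simp,
        ← Real.rpow_mul (by positivity),
        show (d:ℝ) / 2 * (1 / pd) = ((d:ℝ) - 1) / 2 by
          rw [hpd_def]; field_simp]
    have hsplit1 : K₀ * (2 * π * u / pd) ^ (((d:ℝ) - 1) / 2) = CA * u ^ (-(1 / 2 : ℝ)) := by
      rw [hK₀_def, hCA_def, show 2 * π * u = (2 * π) * u by ring,
        Real.mul_rpow (by positivity) hu.le,
        show 2 * π * u / pd = (2 * π / pd) * u by ring,
        Real.mul_rpow (by positivity) hu.le]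
      rw [mul_mul_mul_comm, ← Real.rpow_add hu,
        show -(d:ℝ) / 2 + ((d:ℝ) - 1) / 2 = -(1 / 2 : ℝ) by ring]
    have hterm1 : ‖∫ y : Euc d, gauss d u (x - y) • Dc0 y‖ ≤ CA * N0 * u ^ (-(1 / 2 : ℝ)) := by
      calc ‖∫ y : Euc d, gauss d u (x - y) • Dc0 y‖
          ≤ ∫ y : Euc d, ‖gauss d u (x - y) • Dc0 y‖ := norm_integral_le_integral_norm _
        _ = ∫ y : Euc d, gauss d u (x - y) * ‖Dc0 y‖ := by
            refine integral_congr_ae (Filter.Eventually.of_forall fun y => ?_)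
            show ‖gauss d u (x - y) • Dc0 y‖ = gauss d u (x - y) * ‖Dc0 y‖
            rw [norm_smul, Real.norm_of_nonneg (gauss_pos hu _).le]
        _ ≤ (∫ y : Euc d, gauss d u (x - y) ^ pd) ^ (1 / pd)
            * (∫ y : Euc d, ‖Dc0 y‖ ^ (d:ℝ)) ^ (1 / (d:ℝ)) := hHolder1
        _ = CA * u ^ (-(1 / 2 : ℝ)) * N0 := by rw [hfac, hsplit1, hN0_def]
        _ = CA * N0 * u ^ (-(1 / 2 : ℝ)) := by ring
    -- Term 2 pointwise in s
    have hFb : ∀ s ∈ Ioo (0:ℝ) u,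
        ‖∫ y : Euc d, p s y • Kvec d lam (u - s) (x - y)‖
          ≤ Cq * CB * (s ^ (-a') * (u - s) ^ (-b')) := by
      intro s hs
      obtain ⟨hs0, hsu⟩ := hs
      have ht : 0 < u - s := by linarith
      obtain ⟨hp0, hpint, -⟩ := hprob s hs0
      have hps_mem : MemLp (p s) (ENNReal.ofReal q) volume :=
        ⟨hpint.aestronglyMeasurable, lt_of_le_of_lt (hbound s hs0) ofReal_lt_top⟩
      have hc₂ : (0:ℝ) < 1 / (4 * (u - s)) := by positivity
      set Ct := (2 * π * (u - s)) ^ (-(d:ℝ) / 2) * (u - s) ^ (-(1:ℝ) / 2) with hCt_def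
      have hCt0 : 0 < Ct := by
        have : (0:ℝ) < 2 * π * (u - s) := by positivity
        positivity
      have hKb : ∀ z : Euc d, ‖Kvec d lam (u - s) z‖
          ≤ Ct * rexp (-(1 / (4 * (u - s))) * ‖z‖ ^ 2) := fun z => Kvec_norm_le hlam ht z
      have hKcont : Continuous (fun y : Euc d => ‖Kvec d lam (u - s) (x - y)‖) :=
        ((continuous_Kvec d lam (u - s)).comp (continuous_const.sub continuous_id)).norm
      have hKmem : MemLp (fun y : Euc d => ‖Kvec d lam (u - s) (x - y)‖)
          (ENNReal.ofReal q') volume := by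
        refine MemLp.of_le ((memLp_gaussExp' hc₂ hq'_pos x).const_mul Ct)
          hKcont.aestronglyMeasurable
          (Filter.Eventually.of_forall fun y => ?_)
        rw [norm_norm, Real.norm_of_nonneg (by positivity)]
        exact hKb (x - y)
      have hHolder2 := integral_mul_le_Lp_mul_Lq_of_nonneg (μ := volume) hq_conj
        (Filter.Eventually.of_forall hp0)
        (Filter.Eventually.of_forall fun y => norm_nonneg _)
        hps_mem hKmem
      -- bound on ‖p s‖_q
      have hbound1 : (∫ y : Euc d, p s y ^ q) ^ (1 / q) ≤ Cq * s ^ (-a') := by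
        have hq_ne : ENNReal.ofReal q ≠ 0 := by
          simp [ENNReal.ofReal_eq_zero, not_le, hq0]
        have heq := hps_mem.eLpNorm_eq_integral_rpow_norm hq_ne ofReal_ne_top
        rw [ENNReal.toReal_ofReal hq0.le] at heq
        have hnorm : (∫ y : Euc d, ‖p s y‖ ^ q) = ∫ y : Euc d, p s y ^ q :=
          integral_congr_ae (Filter.Eventually.of_forall fun y => by
            show ‖p s y‖ ^ q = p s y ^ q
            rw [Real.norm_of_nonneg (hp0 y)])
        rw [hnorm] at heq
        have hle := hbound s hs0
        rw [heq] at hle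
        have hY : 0 ≤ Cq / s ^ a' := by positivity
        have h := (ENNReal.ofReal_le_ofReal_iff hY).mp hle
        calc (∫ y : Euc d, p s y ^ q) ^ (1 / q)
            = (∫ y : Euc d, p s y ^ q) ^ q⁻¹ := by rw [one_div]
          _ ≤ Cq / s ^ a' := h
          _ = Cq * s ^ (-a') := by rw [Real.rpow_neg hs0.le, div_eq_mul_inv]
      -- bound on ‖K‖_{q'}
      have hbound2 : (∫ y : Euc d, ‖Kvec d lam (u - s) (x - y)‖ ^ q') ^ (1 / q')
          ≤ Ct * (π / ((1 / (4 * (u - s))) * q')) ^ ((d:ℝ) / 2 * (1 / q')) := by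
        have hint : Integrable
            (fun y : Euc d => (Ct * rexp (-(1 / (4 * (u - s))) * ‖x - y‖ ^ 2)) ^ q') volume := by
          have heq : (fun y : Euc d => (Ct * rexp (-(1 / (4 * (u - s))) * ‖x - y‖ ^ 2)) ^ q')
              = fun y : Euc d =>
                Ct ^ q' * rexp (-((1 / (4 * (u - s))) * q') * ‖x - y‖ ^ 2) :=
            funext fun y => by
              rw [Real.mul_rpow hCt0.le (Real.exp_nonneg _), rpow_gaussExp]
          rw [heq]
          exact (integrable_gaussExp' (by positivity) x).const_mul _
        have hmono2 : (∫ y : Euc d, ‖Kvec d lam (u - s) (x - y)‖ ^ q')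
            ≤ ∫ y : Euc d, (Ct * rexp (-(1 / (4 * (u - s))) * ‖x - y‖ ^ 2)) ^ q' := by
          refine integral_mono_of_nonneg
            (Filter.Eventually.of_forall fun y => Real.rpow_nonneg (norm_nonneg _) _)
            hint (Filter.Eventually.of_forall fun y => ?_)
          exact Real.rpow_le_rpow (norm_nonneg _) (hKb (x - y)) hq'_pos.le
        have hrval : (∫ y : Euc d, (Ct * rexp (-(1 / (4 * (u - s))) * ‖x - y‖ ^ 2)) ^ q')
            = Ct ^ q' * (π / ((1 / (4 * (u - s))) * q')) ^ ((d:ℝ) / 2) := by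
          have heq : (fun y : Euc d => (Ct * rexp (-(1 / (4 * (u - s))) * ‖x - y‖ ^ 2)) ^ q')
              = fun y : Euc d => Ct ^ q' * rexp (-(1 / (4 * (u - s))) * ‖x - y‖ ^ 2) ^ q' :=
            funext fun y => by rw [Real.mul_rpow hCt0.le (Real.exp_nonneg _)]
          rw [heq, integral_const_mul _ _, integral_rpow_gaussExp' hc₂ hq'_pos x]
        calc (∫ y : Euc d, ‖Kvec d lam (u - s) (x - y)‖ ^ q') ^ (1 / q')
            ≤ (∫ y : Euc d, (Ct * rexp (-(1 / (4 * (u - s))) * ‖x - y‖ ^ 2)) ^ q') ^ (1 / q') :=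
              Real.rpow_le_rpow
                (integral_nonneg fun y => Real.rpow_nonneg (norm_nonneg _) _)
                hmono2 (by positivity)
          _ = Ct * (π / ((1 / (4 * (u - s))) * q')) ^ ((d:ℝ) / 2 * (1 / q')) := by
              rw [hrval,
                Real.mul_rpow (Real.rpow_nonneg hCt0.le _) (Real.rpow_nonneg (by positivity) _),
                ← Real.rpow_mul hCt0.le, mul_one_div_cancel hq'_pos.ne', Real.rpow_one,
                ← Real.rpow_mul (by positivity)]
      -- combine
      have hkey : Ct * (π / ((1 / (4 * (u - s))) * q')) ^ ((d:ℝ) / 2 * (1 / q'))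
          = CB * (u - s) ^ (-b') := by
        rw [hCt_def, hCB_def,
          show 2 * π * (u - s) = (2 * π) * (u - s) by ring,
          Real.mul_rpow (by positivity) ht.le,
          show π / ((1 / (4 * (u - s))) * q') = (4 * π / q') * (u - s) by
            field_simp,
          Real.mul_rpow (by positivity) ht.le]
        rw [show (2 * π) ^ (-(d:ℝ) / 2) * (u - s) ^ (-(d:ℝ) / 2) * (u - s) ^ (-(1:ℝ) / 2)
            * ((4 * π / q') ^ ((d:ℝ) / 2 * (1 / q')) * (u - s) ^ ((d:ℝ) / 2 * (1 / q')))
            = ((2 * π) ^ (-(d:ℝ) / 2) * (4 * π / q') ^ ((d:ℝ) / 2 * (1 / q')))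
              * ((u - s) ^ (-(d:ℝ) / 2) * (u - s) ^ (-(1:ℝ) / 2)
                * (u - s) ^ ((d:ℝ) / 2 * (1 / q'))) by ring,
          ← Real.rpow_add ht, ← Real.rpow_add ht]
        congr 1
        rw [hb'_def, hq'_def]
        field_simp
        ring
      calc ‖∫ y : Euc d, p s y • Kvec d lam (u - s) (x - y)‖
          ≤ ∫ y : Euc d, ‖p s y • Kvec d lam (u - s) (x - y)‖ := norm_integral_le_integral_norm _
        _ = ∫ y : Euc d, p s y * ‖Kvec d lam (u - s) (x - y)‖ := by
            refine integral_congr_ae (Filter.Eventually.of_forall fun y => ?_)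
            show ‖p s y • Kvec d lam (u - s) (x - y)‖ = p s y * ‖Kvec d lam (u - s) (x - y)‖
            rw [norm_smul, Real.norm_of_nonneg (hp0 y)]
        _ ≤ (∫ y : Euc d, p s y ^ q) ^ (1 / q)
            * (∫ y : Euc d, ‖Kvec d lam (u - s) (x - y)‖ ^ q') ^ (1 / q') := hHolder2
        _ ≤ (Cq * s ^ (-a'))
            * (Ct * (π / ((1 / (4 * (u - s))) * q')) ^ ((d:ℝ) / 2 * (1 / q'))) := by
            refine mul_le_mul hbound1 hbound2 ?_ (by positivity)
            exact Real.rpow_nonneg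
              (integral_nonneg fun y => Real.rpow_nonneg (norm_nonneg _) _) _
        _ = Cq * CB * (s ^ (-a') * (u - s) ^ (-b')) := by rw [hkey]; ring
    -- Term 2 integral bound
    set c1 := Cq * CB * (u / 2) ^ (-b') with hc1_def
    set c2 := Cq * CB * (u / 2) ^ (-a') with hc2_def
    have hc10 : 0 ≤ c1 := by positivity
    have hc20 : 0 ≤ c2 := by positivity
    have hIa : IntegrableOn (fun s : ℝ => s ^ (-a')) (Ioo 0 u) volume := by
      have h := intervalIntegral.intervalIntegrable_rpow' (a := 0) (b := u)
        (show (-1:ℝ) < -a' by linarith)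
      rw [intervalIntegrable_iff_integrableOn_Ioc_of_le hu.le] at h
      exact h.mono_set Ioo_subset_Ioc_self
    have hIb : IntegrableOn (fun s : ℝ => (u - s) ^ (-b')) (Ioo 0 u) volume := by
      have h := ((intervalIntegral.intervalIntegrable_rpow' (a := 0) (b := u)
        (show (-1:ℝ) < -b' by linarith)).comp_sub_left u).symm
      simp only [sub_zero, sub_self] at h
      rw [intervalIntegrable_iff_integrableOn_Ioc_of_le hu.le] at h
      exact h.mono_set Ioo_subset_Ioc_self
    have hCqCB : 0 ≤ Cq * CB := mul_nonneg hCq.le hCB0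
    have hphi : ∀ s ∈ Ioo (0:ℝ) u,
        ‖∫ y : Euc d, p s y • Kvec d lam (u - s) (x - y)‖
          ≤ c1 * s ^ (-a') + c2 * (u - s) ^ (-b') := by
      intro s hs
      refine (hFb s hs).trans ?_
      obtain ⟨hs0, hsu⟩ := hs
      have h2 : (0:ℝ) < u / 2 := half_pos hu
      rcases le_or_gt s (u / 2) with hc | hc
      · have hle : (u - s) ^ (-b') ≤ (u / 2) ^ (-b') :=
          Real.rpow_le_rpow_of_nonpos h2 (by linarith) (by linarith)
        have h1 : Cq * CB * (s ^ (-a') * (u - s) ^ (-b')) ≤ c1 * s ^ (-a') := by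
          have hmul : s ^ (-a') * (u - s) ^ (-b') ≤ (u / 2) ^ (-b') * s ^ (-a') := by
            rw [mul_comm]
            exact mul_le_mul_of_nonneg_right hle (Real.rpow_nonneg hs0.le _)
          calc Cq * CB * (s ^ (-a') * (u - s) ^ (-b'))
              ≤ Cq * CB * ((u / 2) ^ (-b') * s ^ (-a')) :=
                mul_le_mul_of_nonneg_left hmul hCqCB
            _ = c1 * s ^ (-a') := by rw [hc1_def]; ring
        refine h1.trans (le_add_of_nonneg_right ?_)
        exact mul_nonneg hc20 (Real.rpow_nonneg (by linarith) _)
      · have hle : s ^ (-a') ≤ (u / 2) ^ (-a') :=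
          Real.rpow_le_rpow_of_nonpos h2 hc.le (by linarith)
        have h1 : Cq * CB * (s ^ (-a') * (u - s) ^ (-b')) ≤ c2 * (u - s) ^ (-b') := by
          have hmul : s ^ (-a') * (u - s) ^ (-b') ≤ (u / 2) ^ (-a') * (u - s) ^ (-b') :=
            mul_le_mul_of_nonneg_right hle (Real.rpow_nonneg (by linarith) _)
          calc Cq * CB * (s ^ (-a') * (u - s) ^ (-b'))
              ≤ Cq * CB * ((u / 2) ^ (-a') * (u - s) ^ (-b')) :=
                mul_le_mul_of_nonneg_left hmul hCqCB
            _ = c2 * (u - s) ^ (-b') := by rw [hc2_def]; ring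
        refine h1.trans (le_add_of_nonneg_left ?_)
        exact mul_nonneg hc10 (Real.rpow_nonneg hs0.le _)
    have hphi_int : Integrable
        (fun s : ℝ => c1 * s ^ (-a') + c2 * (u - s) ^ (-b'))
        (volume.restrict (Ioo 0 u)) :=
      (hIa.const_mul c1).add (hIb.const_mul c2)
    have hint_a : ∫ s in Ioo (0:ℝ) u, s ^ (-a') = u ^ (1 - a') / (1 - a') := by
      rw [← MeasureTheory.integral_Ioc_eq_integral_Ioo,
        ← intervalIntegral.integral_of_le hu.le,
        integral_rpow (Or.inl (by linarith)),
        Real.zero_rpow (ne_of_gt (by linarith : (0:ℝ) < -a' + 1)), sub_zero,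
        show -a' + 1 = 1 - a' by ring]
    have hint_b : ∫ s in Ioo (0:ℝ) u, (u - s) ^ (-b') = u ^ (1 - b') / (1 - b') := by
      rw [← MeasureTheory.integral_Ioc_eq_integral_Ioo,
        ← intervalIntegral.integral_of_le hu.le]
      rw [intervalIntegral.integral_comp_sub_left (fun z : ℝ => z ^ (-b')) u]
      simp only [sub_self, sub_zero]
      rw [integral_rpow (Or.inl (by linarith)),
        Real.zero_rpow (ne_of_gt (by linarith : (0:ℝ) < -b' + 1)), sub_zero,
        show -b' + 1 = 1 - b' by ring]
    have hterm2 : ‖∫ s in Ioo (0:ℝ) u, ∫ y : Euc d, p s y • Kvec d lam (u - s) (x - y)‖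
        ≤ M * u ^ (-(1 / 2 : ℝ)) := by
      have h1 : ‖∫ s in Ioo (0:ℝ) u, ∫ y : Euc d, p s y • Kvec d lam (u - s) (x - y)‖
          ≤ ∫ s in Ioo (0:ℝ) u, ‖∫ y : Euc d, p s y • Kvec d lam (u - s) (x - y)‖ :=
        norm_integral_le_integral_norm _
      have h2 : ∫ s in Ioo (0:ℝ) u, ‖∫ y : Euc d, p s y • Kvec d lam (u - s) (x - y)‖
          ≤ ∫ s in Ioo (0:ℝ) u, (c1 * s ^ (-a') + c2 * (u - s) ^ (-b')) := by
        refine integral_mono_of_nonneg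
          (Filter.Eventually.of_forall fun s => norm_nonneg _) hphi_int ?_
        exact (ae_restrict_iff' measurableSet_Ioo).2
          (Filter.Eventually.of_forall fun s hs => hphi s hs)
      have h3 : ∫ s in Ioo (0:ℝ) u, (c1 * s ^ (-a') + c2 * (u - s) ^ (-b'))
          = c1 * (u ^ (1 - a') / (1 - a')) + c2 * (u ^ (1 - b') / (1 - b')) := by
        rw [integral_add (hIa.const_mul c1) (hIb.const_mul c2),
          integral_const_mul _ _, integral_const_mul _ _, hint_a, hint_b]
      have e1 : (u / 2) ^ (-b') * u ^ (1 - a') = 2 ^ b' * u ^ (-(1 / 2 : ℝ)) := by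
        rw [show u / 2 = u * (2:ℝ)⁻¹ by ring, Real.mul_rpow hu.le (by norm_num),
          Real.inv_rpow (by norm_num), ← Real.rpow_neg (by norm_num), neg_neg]
        rw [mul_comm (u ^ (-b')) _, mul_assoc, ← Real.rpow_add hu,
          show -b' + (1 - a') = -(1 / 2 : ℝ) by rw [ha'_def, hb'_def]; ring]
      have e2 : (u / 2) ^ (-a') * u ^ (1 - b') = 2 ^ a' * u ^ (-(1 / 2 : ℝ)) := by
        rw [show u / 2 = u * (2:ℝ)⁻¹ by ring, Real.mul_rpow hu.le (by norm_num),
          Real.inv_rpow (by norm_num), ← Real.rpow_neg (by norm_num), neg_neg]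
        rw [mul_comm (u ^ (-a')) _, mul_assoc, ← Real.rpow_add hu,
          show -a' + (1 - b') = -(1 / 2 : ℝ) by rw [ha'_def, hb'_def]; ring]
      have h4 : c1 * (u ^ (1 - a') / (1 - a')) + c2 * (u ^ (1 - b') / (1 - b'))
          = M * u ^ (-(1 / 2 : ℝ)) := by
        rw [hc1_def, hc2_def, hM_def]
        rw [show Cq * CB * (u / 2) ^ (-b') * (u ^ (1 - a') / (1 - a'))
            = (Cq * CB / (1 - a')) * ((u / 2) ^ (-b') * u ^ (1 - a')) by ring,
          show Cq * CB * (u / 2) ^ (-a') * (u ^ (1 - b') / (1 - b'))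
            = (Cq * CB / (1 - b')) * ((u / 2) ^ (-a') * u ^ (1 - b')) by ring,
          e1, e2]
        ring
      exact h1.trans (h2.trans_eq (h3.trans h4))
    -- assemble the two terms
    have hA : ‖χ * rexp (-lam * u)‖ ≤ χ := by
      rw [Real.norm_eq_abs, abs_of_nonneg (by positivity)]
      have hle1 : rexp (-lam * u) ≤ 1 := Real.exp_le_one_iff.mpr
        (by simp only [neg_mul]; exact neg_nonpos.2 (mul_nonneg hlam hu.le))
      calc χ * rexp (-lam * u) ≤ χ * 1 := mul_le_mul_of_nonneg_left hle1 hχ.le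
        _ = χ := mul_one χ
    have hB : ‖χ‖ = χ := Real.norm_of_nonneg hχ.le
    have hu12 : 0 ≤ u ^ (-(1 / 2 : ℝ)) := Real.rpow_nonneg hu.le _
    have hnd : ‖drift d lam χ Dc0 p u x‖
        ≤ χ * (CA * N0 * u ^ (-(1 / 2 : ℝ))) + χ * (M * u ^ (-(1 / 2 : ℝ))) := by
      unfold drift
      refine (norm_add_le _ _).trans ?_
      rw [norm_smul, norm_smul, hB]
      refine add_le_add ?_ (mul_le_mul_of_nonneg_left hterm2 hχ.le)
      exact mul_le_mul hA hterm1 (norm_nonneg _) hχ.le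
    calc ‖drift d lam χ Dc0 p u x‖
        ≤ χ * (CA * N0 * u ^ (-(1 / 2 : ℝ))) + χ * (M * u ^ (-(1 / 2 : ℝ))) := hnd
      _ = χ * (CA * N0 + M) * u ^ (-(1 / 2 : ℝ)) := by ring
      _ ≤ (χ * (CA * N0 + M) + 1) * u ^ (-(1 / 2 : ℝ)) :=
          mul_le_mul_of_nonneg_right (le_add_of_nonneg_right zero_le_one) hu12
  rw [eLpNorm_exponent_top]
  exact eLpNormEssSup_le_of_ae_bound (Filter.Eventually.of_forall hptw)
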